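/- Let A_1,...,A_n be events in a probability space with a negative dependency graph G (i.e., for every i and every set S of non-neighbors of i with Pr(∧_{j∈S} ¬A_j) > 0, we have Pr(A_i | ∧_{j∈S} ¬A_j) ≤ Pr(A_i)). If there exist real numbers x_1,...,x_n ∈ [0,1) such that Pr(A_i) ≤ x_i ∏_{ij∈E(G)} (1−x_j) for all i, then Pr(∧_{i=1}^n ¬A_i) ≥ ∏_{i=1}^n (1−x_i). -/

import Mathlib

open MeasureTheory Finset

namespace LLLAux

variable {Ω : Type*} [MeasurableSpace Ω] (μ : Measure Ω) [IsProbabilityMeasure μ]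
  {n : ℕ} (A : Fin n → Set Ω)

lemma C_meas (hA : ∀ i, MeasurableSet (A i)) (S : Finset (Fin n)) :
    MeasurableSet (⋂ j ∈ S, (A j)ᶜ) :=
  MeasurableSet.biInter S.countable_toSet fun j _ => (hA j).compl

lemma P_insert (hA : ∀ i, MeasurableSet (A i)) (i : Fin n) (S : Finset (Fin n)) :
    (μ (⋂ j ∈ insert i S, (A j)ᶜ)).toReal
      = (μ (⋂ j ∈ S, (A j)ᶜ)).toReal - (μ (A i ∩ ⋂ j ∈ S, (A j)ᶜ)).toReal := by
  have h1 : (⋂ j ∈ insert i S, (A j)ᶜ) = (⋂ j ∈ S, (A j)ᶜ) \ A i := by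
    rw [Finset.set_biInter_insert]
    ext ω
    simp only [Set.mem_inter_iff, Set.mem_compl_iff, Set.mem_diff]
    tauto
  have h2 : μ ((⋂ j ∈ S, (A j)ᶜ) ∩ A i) + μ ((⋂ j ∈ S, (A j)ᶜ) \ A i)
      = μ (⋂ j ∈ S, (A j)ᶜ) := measure_inter_add_diff _ (hA i)
  have h3 := congrArg ENNReal.toReal h2
  rw [ENNReal.toReal_add (measure_ne_top μ _) (measure_ne_top μ _)] at h3
  rw [Set.inter_comm] at h3
  rw [h1]
  linarith

lemma Kgen (x : Fin n → ℝ) (hA : ∀ i, MeasurableSet (A i))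
    (hx : ∀ i, x i ∈ Set.Ico (0:ℝ) 1) {N : ℕ}
    (Hyp : ∀ S : Finset (Fin n), S.card < N → ∀ i ∉ S,
      (μ (A i ∩ ⋂ j ∈ S, (A j)ᶜ)).toReal ≤ x i * (μ (⋂ j ∈ S, (A j)ᶜ)).toReal) :
    ∀ S₁ S₂ : Finset (Fin n), Disjoint S₁ S₂ → (S₁ ∪ S₂).card ≤ N →
      (∏ j ∈ S₁, (1 - x j)) * (μ (⋂ j ∈ S₂, (A j)ᶜ)).toReal
        ≤ (μ (⋂ j ∈ S₁ ∪ S₂, (A j)ᶜ)).toReal := by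
  intro S₁
  induction S₁ using Finset.induction_on with
  | empty => intro S₂ _ _; simp
  | @insert a S₁ ha ih =>
    intro S₂ hd hcard
    have haU : a ∉ S₁ ∪ S₂ := by
      simp only [Finset.mem_union, not_or]
      exact ⟨ha, Finset.disjoint_left.mp hd (Finset.mem_insert_self a S₁)⟩
    have hins : insert a S₁ ∪ S₂ = insert a (S₁ ∪ S₂) := by
      rw [Finset.insert_union]
    have hcard' : (S₁ ∪ S₂).card < N := by
      rw [hins, Finset.card_insert_of_notMem haU] at hcard
      omega
    have hHyp := Hyp (S₁ ∪ S₂) hcard' a haU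
    have hih := ih S₂ (Finset.disjoint_insert_left.mp hd).2 (le_of_lt hcard')
    have hPins := P_insert μ A hA a (S₁ ∪ S₂)
    rw [hins, hPins]
    rw [Finset.prod_insert ha]
    have hxa := hx a
    have hP2 : (0:ℝ) ≤ (μ (⋂ j ∈ S₂, (A j)ᶜ)).toReal := ENNReal.toReal_nonneg
    have hP12 : (0:ℝ) ≤ (μ (⋂ j ∈ S₁ ∪ S₂, (A j)ᶜ)).toReal := ENNReal.toReal_nonneg
    have h1a : (0:ℝ) ≤ 1 - x a := by
      have := hxa.2; simp at this ⊢; linarith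
    nlinarith [hxa.1, hxa.2]

lemma Pos (x : Fin n → ℝ) (hA : ∀ i, MeasurableSet (A i))
    (hx : ∀ i, x i ∈ Set.Ico (0:ℝ) 1) {N : ℕ}
    (Hyp : ∀ S : Finset (Fin n), S.card < N → ∀ i ∉ S,
      (μ (A i ∩ ⋂ j ∈ S, (A j)ᶜ)).toReal ≤ x i * (μ (⋂ j ∈ S, (A j)ᶜ)).toReal)
    (S : Finset (Fin n)) (hS : S.card ≤ N) :
    ∏ j ∈ S, (1 - x j) ≤ (μ (⋂ j ∈ S, (A j)ᶜ)).toReal := by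
  have := Kgen μ A x hA hx Hyp S ∅ (Finset.disjoint_empty_right S) (by simpa using hS)
  simpa using this

lemma main (x : Fin n → ℝ) (hA : ∀ i, MeasurableSet (A i))
    (G : SimpleGraph (Fin n)) [DecidableRel G.Adj]
    (hneg : ∀ (i : Fin n) (S : Finset (Fin n)),
      (∀ j ∈ S, j ≠ i ∧ ¬ G.Adj i j) →
      0 < μ (⋂ j ∈ S, (A j)ᶜ) →
      μ (A i ∩ ⋂ j ∈ S, (A j)ᶜ) ≤ μ (A i) * μ (⋂ j ∈ S, (A j)ᶜ))
    (hx : ∀ i, x i ∈ Set.Ico (0:ℝ) 1)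
    (hcond : ∀ i, (μ (A i)).toReal ≤ x i * ∏ j ∈ G.neighborFinset i, (1 - x j)) :
    ∀ N : ℕ, ∀ S : Finset (Fin n), S.card < N → ∀ i ∉ S,
      (μ (A i ∩ ⋂ j ∈ S, (A j)ᶜ)).toReal ≤ x i * (μ (⋂ j ∈ S, (A j)ᶜ)).toReal := by
  intro N
  induction N with
  | zero => intro S hS; omega
  | succ N ih =>
    intro S hS i hi
    set S₁ := S.filter (fun j => G.Adj i j) with hS₁def
    set S₂ := S.filter (fun j => ¬ G.Adj i j) with hS₂def
    have hunion : S₁ ∪ S₂ = S := Finset.filter_union_filter_not_eq _ S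
    have hdisj : Disjoint S₁ S₂ := Finset.disjoint_filter_filter_not S S _
    have hsub2 : S₂ ⊆ S := Finset.filter_subset _ S
    have hsub1 : S₁ ⊆ G.neighborFinset i := by
      intro j hj
      rw [SimpleGraph.mem_neighborFinset]
      exact (Finset.mem_filter.mp hj).2
    have hcardS : S.card ≤ N := by omega
    have hcard2 : S₂.card ≤ N := le_trans (Finset.card_le_card hsub2) hcardS
    -- positivity of P S₂
    have hprod2pos : (0:ℝ) < ∏ j ∈ S₂, (1 - x j) :=
      Finset.prod_pos fun j _ => by linarith [(hx j).2]
    have hP2 : ∏ j ∈ S₂, (1 - x j) ≤ (μ (⋂ j ∈ S₂, (A j)ᶜ)).toReal :=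
      Pos μ A x hA hx ih S₂ hcard2
    have hμ2pos : 0 < μ (⋂ j ∈ S₂, (A j)ᶜ) := by
      by_contra h
      push_neg at h
      have h0 : μ (⋂ j ∈ S₂, (A j)ᶜ) = 0 := le_antisymm h (zero_le)
      rw [h0] at hP2
      simp at hP2
      linarith
    have hnegi := hneg i S₂ (fun j hj => by
      have hjS : j ∈ S := hsub2 hj
      exact ⟨fun h => hi (h ▸ hjS), (Finset.mem_filter.mp hj).2⟩) hμ2pos
    -- real versions
    have hCS : (⋂ j ∈ S, (A j)ᶜ) ⊆ ⋂ j ∈ S₂, (A j)ᶜ := by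
      apply Set.biInter_mono hsub2 (fun j _ => le_refl _)
    have h1 : (μ (A i ∩ ⋂ j ∈ S, (A j)ᶜ)).toReal ≤ (μ (A i ∩ ⋂ j ∈ S₂, (A j)ᶜ)).toReal :=
      ENNReal.toReal_mono (measure_ne_top μ _)
        (measure_mono (Set.inter_subset_inter_right _ hCS))
    have h2 : (μ (A i ∩ ⋂ j ∈ S₂, (A j)ᶜ)).toReal
        ≤ (μ (A i)).toReal * (μ (⋂ j ∈ S₂, (A j)ᶜ)).toReal := by
      have := ENNReal.toReal_mono (by
        exact ENNReal.mul_ne_top (measure_ne_top μ _) (measure_ne_top μ _)) hnegi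
      rwa [ENNReal.toReal_mul] at this
    have h3 := hcond i
    have h4 : ∏ j ∈ G.neighborFinset i, (1 - x j) ≤ ∏ j ∈ S₁, (1 - x j) := by
      have hsd := Finset.prod_sdiff (f := fun j => (1 - x j)) hsub1
      have hle1 : ∏ j ∈ G.neighborFinset i \ S₁, (1 - x j) ≤ 1 :=
        Finset.prod_le_one (fun j _ => by linarith [(hx j).2]) (fun j _ => by linarith [(hx j).1])
      have hnn : (0:ℝ) ≤ ∏ j ∈ S₁, (1 - x j) :=
        Finset.prod_nonneg fun j _ => by linarith [(hx j).2]
      nlinarith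
    have h5 : (∏ j ∈ S₁, (1 - x j)) * (μ (⋂ j ∈ S₂, (A j)ᶜ)).toReal
        ≤ (μ (⋂ j ∈ S, (A j)ᶜ)).toReal := by
      have := Kgen μ A x hA hx ih S₁ S₂ hdisj (by rw [hunion]; exact hcardS)
      rwa [hunion] at this
    have hP2nn : (0:ℝ) ≤ (μ (⋂ j ∈ S₂, (A j)ᶜ)).toReal := ENNReal.toReal_nonneg
    have hxi := hx i
    calc (μ (A i ∩ ⋂ j ∈ S, (A j)ᶜ)).toReal
        ≤ (μ (A i)).toReal * (μ (⋂ j ∈ S₂, (A j)ᶜ)).toReal := le_trans h1 h2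
      _ ≤ (x i * ∏ j ∈ G.neighborFinset i, (1 - x j)) * (μ (⋂ j ∈ S₂, (A j)ᶜ)).toReal :=
          mul_le_mul_of_nonneg_right h3 hP2nn
      _ ≤ x i * ((∏ j ∈ S₁, (1 - x j)) * (μ (⋂ j ∈ S₂, (A j)ᶜ)).toReal) := by
          rw [mul_assoc]
          exact mul_le_mul_of_nonneg_left (mul_le_mul_of_nonneg_right h4 hP2nn) hxi.1
      _ ≤ x i * (μ (⋂ j ∈ S, (A j)ᶜ)).toReal :=
          mul_le_mul_of_nonneg_left h5 hxi.1

end LLLAux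

/-- **Lovász Local Lemma with negative dependency graphs.**
If `G` is a negative dependency graph for events `A 1, ..., A n` and there are
numbers `x i ∈ [0,1)` with `Pr(A i) ≤ x i * ∏_{ij ∈ E(G)} (1 - x j)`, then
`Pr(∧ᵢ ¬A i) ≥ ∏ᵢ (1 - x i)`. -/
theorem lll_negative_dependency
    {Ω : Type*} [MeasurableSpace Ω] (μ : Measure Ω) [IsProbabilityMeasure μ]
    (n : ℕ) (A : Fin n → Set Ω) (hA : ∀ i, MeasurableSet (A i))
    (G : SimpleGraph (Fin n)) [DecidableRel G.Adj]
    (hneg : ∀ (i : Fin n) (S : Finset (Fin n)),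
      (∀ j ∈ S, j ≠ i ∧ ¬ G.Adj i j) →
      0 < μ (⋂ j ∈ S, (A j)ᶜ) →
      μ (A i ∩ ⋂ j ∈ S, (A j)ᶜ) ≤ μ (A i) * μ (⋂ j ∈ S, (A j)ᶜ))
    (x : Fin n → ℝ) (hx : ∀ i, x i ∈ Set.Ico (0 : ℝ) 1)
    (hcond : ∀ i, (μ (A i)).toReal ≤ x i * ∏ j ∈ G.neighborFinset i, (1 - x j)) :
    ∏ i, (1 - x i) ≤ (μ (⋂ i, (A i)ᶜ)).toReal := by
  have Hyp := LLLAux.main μ A x hA G hneg hx hcond n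
  have := LLLAux.Pos μ A x hA hx Hyp (Finset.univ) (by simp)
  have heq : (⋂ j ∈ (Finset.univ : Finset (Fin n)), (A j)ᶜ) = ⋂ i, (A i)ᶜ := by
    ext ω; simp
  rwa [heq] at this
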